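/- Let h : [0,1] → [0,∞) be a measurable function with h(v) ≤ c for all v, and let μ_w be a non-atomic measure on [0,1] with μ_w([0,1]) = c. Then there exists a measurable subset Y* of [0,1] × [0,1] (with respect to the product σ-algebra) such that for every v ∈ [0,1], the vertical slice Y*_v = {t : (v,t) ∈ Y*} satisfies μ_w(Y*_v) = h(v). -/

import Mathlib

open MeasureTheory Set
open scoped ENNReal

lemma key_slice (μw : Measure ℝ) [IsFiniteMeasure μw] [NullSingletonClass μw] (c : ℝ≥0∞)
    (hc : μw (Set.Icc 0 1) = c) (hfull : μw (Set.Icc (0:ℝ) 1)ᶜ = 0)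
    (a : ℝ≥0∞) (ha : a ≤ c) : μw {t | μw (Set.Iic t) ≤ a} = a := by
  have huniv : μw (Set.univ : Set ℝ) = c := by
    rw [← measure_add_measure_compl (measurableSet_Icc : MeasurableSet (Set.Icc (0:ℝ) 1)),
      hc, hfull, add_zero]
  rcases eq_or_lt_of_le ha with rfl | hlt
  · have : {t : ℝ | μw (Set.Iic t) ≤ a} = Set.univ := by
      ext t; simp only [Set.mem_setOf_eq, Set.mem_univ, iff_true]
      calc μw (Set.Iic t) ≤ μw Set.univ := measure_mono (Set.subset_univ _)
        _ = a := huniv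
    rw [this, huniv]
  · set S := {t : ℝ | μw (Set.Iic t) ≤ a} with hS
    have hmem : ∀ {t}, t ∈ S ↔ μw (Set.Iic t) ≤ a := Iff.rfl
    have hlower : ∀ {t t' : ℝ}, t' ≤ t → t ∈ S → t' ∈ S := fun htt' ht =>
      le_trans (measure_mono (Set.Iic_subset_Iic.2 htt')) ht
    have hne : (-1 : ℝ) ∈ S := by
      have hsub : Set.Iic (-1 : ℝ) ⊆ (Set.Icc (0:ℝ) 1)ᶜ := by
        intro t ht; simp only [Set.mem_Iic] at ht
        simp only [Set.mem_compl_iff, Set.mem_Icc, not_and_or, not_le]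
        left; linarith
      calc μw (Set.Iic (-1:ℝ)) ≤ μw (Set.Icc (0:ℝ) 1)ᶜ := measure_mono hsub
        _ = 0 := hfull
        _ ≤ a := zero_le
    have hbdd : ∀ t ∈ S, t ≤ 1 := by
      intro t ht
      by_contra hgt
      push_neg at hgt
      have : c ≤ μw (Set.Iic t) :=
        hc ▸ measure_mono (fun x hx => Set.mem_Iic.2 (le_trans hx.2 hgt.le))
      exact absurd (le_trans this ht) (not_le.2 hlt)
    have hbddAbove : BddAbove S := ⟨1, fun t ht => hbdd t ht⟩
    set s := sSup S with hs
    have hIio : Set.Iio s ⊆ S := fun r hr => by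
      obtain ⟨t, htS, hrt⟩ := exists_lt_of_lt_csSup ⟨_, hne⟩ hr
      exact hlower hrt.le htS
    have hSIic : S ⊆ Set.Iic s := fun t ht => le_csSup hbddAbove ht
    -- upper bound : μw (Iio s) ≤ a
    have hIioUnion : Set.Iio s = ⋃ n : ℕ, Set.Iic (s - 1 / (n + 1)) := by
      ext r
      simp only [Set.mem_Iio, Set.mem_iUnion, Set.mem_Iic]
      constructor
      · intro hr
        obtain ⟨n, hn⟩ := exists_nat_one_div_lt (sub_pos.2 hr)
        exact ⟨n, by linarith⟩
      · rintro ⟨n, hn⟩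
        have : (0:ℝ) < 1 / (n + 1) := by positivity
        linarith
    have hub : μw (Set.Iio s) ≤ a := by
      rw [hIioUnion]
      have hmono : Monotone fun n : ℕ => Set.Iic (s - 1 / (n + 1)) := by
        intro m n hmn
        apply Set.Iic_subset_Iic.2
        have : (1:ℝ) / (n + 1) ≤ 1 / (m + 1) := by
          apply one_div_le_one_div_of_le (by positivity)
          exact_mod_cast by exact_mod_cast add_le_add_left (Nat.cast_le.2 hmn) 1
        linarith
      refine le_of_tendsto' (tendsto_measure_iUnion_atTop hmono) fun n => ?_
      have hpos : (0:ℝ) < 1/(n+1) := by positivity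
      exact hIio (Set.mem_Iio.2 (by linarith))
    -- lower bound : a ≤ μw (Iic s)
    have hIicInter : Set.Iic s = ⋂ n : ℕ, Set.Iic (s + 1 / (n + 1)) := by
      ext r
      simp only [Set.mem_Iic, Set.mem_iInter]
      constructor
      · intro hr n
        have : (0:ℝ) < 1 / (n + 1) := by positivity
        linarith
      · intro hr
        by_contra hgt
        push_neg at hgt
        obtain ⟨n, hn⟩ := exists_nat_one_div_lt (sub_pos.2 hgt)
        have := hr n
        linarith
    have hlb : a ≤ μw (Set.Iic s) := by
      rw [hIicInter]
      have hanti : Antitone fun n : ℕ => Set.Iic (s + 1 / (n + 1)) := by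
        intro m n hmn
        apply Set.Iic_subset_Iic.2
        have : (1:ℝ) / (n + 1) ≤ 1 / (m + 1) := by
          apply one_div_le_one_div_of_le (by positivity)
          exact_mod_cast add_le_add_left (Nat.cast_le.2 hmn) 1
        linarith
      refine ge_of_tendsto' (tendsto_measure_iInter_atTop
        (fun n => measurableSet_Iic.nullMeasurableSet) hanti ⟨0, measure_ne_top _ _⟩) fun n => ?_
      have hnot : s + 1 / (n + 1 : ℝ) ∉ S := by
        intro hmem'
        have := le_csSup hbddAbove hmem'
        have hpos : (0:ℝ) < 1/(n+1) := by positivity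
        linarith
      exact le_of_not_ge hnot
    have hIioIic : μw (Set.Iio s) = μw (Set.Iic s) := by
      have heq : Set.Iic s = Set.Iio s ∪ {s} := by
        ext r; simp only [Set.mem_Iic, Set.mem_union, Set.mem_Iio, Set.mem_singleton_iff]
        constructor
        · intro hr; rcases lt_or_eq_of_le hr with h'|h'; exacts [Or.inl h', Or.inr h']
        · rintro (h'|rfl); exacts [h'.le, le_rfl]
      rw [heq]
      refine le_antisymm (measure_mono Set.subset_union_left) ?_
      calc μw (Set.Iio s ∪ {s}) ≤ μw (Set.Iio s) + μw {s} := measure_union_le _ _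
        _ = μw (Set.Iio s) := by rw [measure_singleton, add_zero]
    have h1 : μw S ≤ a := le_trans (measure_mono hSIic) (hIioIic ▸ hub)
    have h2 : a ≤ μw S := le_trans (hIioIic ▸ hlb) (measure_mono hIio)
    exact le_antisymm h1 h2

theorem stmt3 (μw : Measure ℝ) [IsFiniteMeasure μw] [NullSingletonClass μw] (c : ℝ≥0∞)
    (hc : μw (Set.Icc 0 1) = c) (hfull : μw (Set.Icc (0:ℝ) 1)ᶜ = 0)
    (h : ℝ → ℝ≥0∞) (hmeas : Measurable h) (hbound : ∀ v, h v ≤ c) :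
    ∃ Y : Set (ℝ × ℝ), MeasurableSet Y ∧
      ∀ v ∈ Set.Icc (0:ℝ) 1, μw {t | (v, t) ∈ Y} = h v := by
  refine ⟨{p : ℝ × ℝ | μw (Set.Iic p.2) ≤ h p.1}, ?_, ?_⟩
  · have hF : Measurable fun t : ℝ => μw (Set.Iic t) :=
      Monotone.measurable fun t t' htt' => measure_mono (Set.Iic_subset_Iic.2 htt')
    exact measurableSet_le (hF.comp measurable_snd) (hmeas.comp measurable_fst)
  · intro v _
    exact key_slice μw c hc hfull (h v) (hbound v)
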